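/- Let Ξ ∈ ℂ^{n × L} be the matrix of DMD modes with columns ξ_1, …, ξ_L, let λ_1, …, λ_L ∈ ℂ be the DMD eigenvalues, let V_and ∈ ℂ^{L × m} be the Vandermonde matrix with entries (V_and)_{l,k} = λ_l^{k−1}, and let Q_1 ∈ ℂ^{n × m} be a data matrix. Then a vector a = (a_1, …, a_L)ᵀ ∈ ℂ^L minimizes the Frobenius-norm objective ‖Q_1 − Ξ diag(a_1, …, a_L) V_and‖_F² if and only if it satisfies the linear system ((Ξ*Ξ) ∘ conj(V_and V_and*)) a = conj(diag-vector(V_and Q_1* Ξ)), where ∘ denotes the Hadamard (entrywise) product, * denotes the conjugate transpose, conj denotes entrywise complex conjugation, and diag-vector(M) denotes the vector of diagonal entries of the square matrix M. -/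

import Mathlib

open Matrix BigOperators


lemma lsq_cross {ι κ : Type*} [Fintype ι] [Fintype κ]
    (T : Matrix ι κ ℂ) (r : ι → ℂ) (c : κ → ℂ) :
    ∑ i, r i * (starRingEnd ℂ) ((T *ᵥ c) i) =
      ∑ l, (starRingEnd ℂ) (c l) * ∑ i, (starRingEnd ℂ) (T i l) * r i := by
  simp only [Matrix.mulVec, dotProduct, map_sum, _root_.map_mul, Finset.mul_sum]
  rw [Finset.sum_comm]
  exact Finset.sum_congr rfl fun l _ => Finset.sum_congr rfl fun i _ => by ring

lemma lsq_expand {ι κ : Type*} [Fintype ι] [Fintype κ]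
    (T : Matrix ι κ ℂ) (y : ι → ℂ) (a b : κ → ℂ) :
    ∑ i, Complex.normSq (y i - (T *ᵥ b) i) =
      (∑ i, Complex.normSq (y i - (T *ᵥ a) i))
      + (∑ i, Complex.normSq ((T *ᵥ (b - a)) i))
      - 2 * (∑ l, (starRingEnd ℂ) ((b - a) l) *
          ∑ i, (starRingEnd ℂ) (T i l) * (y i - (T *ᵥ a) i)).re := by
  have h1 : ∀ i, y i - (T *ᵥ b) i = (y i - (T *ᵥ a) i) - (T *ᵥ (b - a)) i := by
    intro i
    rw [Matrix.mulVec_sub]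
    simp only [Pi.sub_apply]
    ring
  calc ∑ i, Complex.normSq (y i - (T *ᵥ b) i)
      = ∑ i, (Complex.normSq (y i - (T *ᵥ a) i)
          + Complex.normSq ((T *ᵥ (b - a)) i)
          - 2 * ((y i - (T *ᵥ a) i) * (starRingEnd ℂ) ((T *ᵥ (b - a)) i)).re) := by
        refine Finset.sum_congr rfl fun i _ => ?_
        rw [h1 i, Complex.normSq_sub]
    _ = _ := by
        rw [Finset.sum_sub_distrib, Finset.sum_add_distrib, ← Finset.mul_sum,
          ← Complex.re_sum, lsq_cross]

lemma lsq_key {ι κ : Type*} [Fintype ι] [Fintype κ] [DecidableEq κ]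
    (T : Matrix ι κ ℂ) (y : ι → ℂ) (a : κ → ℂ) :
    (∀ b : κ → ℂ,
        (∑ i, Complex.normSq (y i - (T *ᵥ a) i)) ≤
        ∑ i, Complex.normSq (y i - (T *ᵥ b) i)) ↔
    ∀ l, ∑ i, (starRingEnd ℂ) (T i l) * (y i - (T *ᵥ a) i) = 0 := by
  constructor
  · intro h l
    by_contra hne
    set u : ℂ := ∑ i, (starRingEnd ℂ) (T i l) * (y i - (T *ᵥ a) i) with hu
    set N : ℝ := Complex.normSq u with hNdef
    have hN : 0 < N := Complex.normSq_pos.2 hne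
    set K : ℝ := ∑ i, Complex.normSq ((T *ᵥ (Pi.single l u : κ → ℂ)) i) with hK
    have hK0 : 0 ≤ K := Finset.sum_nonneg fun i _ => Complex.normSq_nonneg _
    set s : ℝ := N / (K + 1) with hs_def
    have hs : 0 < s := by positivity
    set b : κ → ℂ := a + (s : ℂ) • (Pi.single l u : κ → ℂ) with hb
    have hba : b - a = (s : ℂ) • (Pi.single l u : κ → ℂ) := by simp [hb]
    have hcross : (∑ l', (starRingEnd ℂ) ((b - a) l') *
        ∑ i, (starRingEnd ℂ) (T i l') * (y i - (T *ᵥ a) i)) = ((s * N : ℝ) : ℂ) := by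
      rw [hba]
      rw [Finset.sum_eq_single l]
      · simp only [Pi.smul_apply, Pi.single_eq_same, smul_eq_mul, _root_.map_mul, ← hu]
        rw [Complex.conj_ofReal]
        push_cast
        rw [mul_assoc, Complex.conj_mul']
        norm_cast
        rw [hNdef, Complex.normSq_eq_norm_sq]
      · intro j _ hj
        simp [Pi.single_eq_of_ne hj]
      · intro hl; exact absurd (Finset.mem_univ l) hl
    have hquad : (∑ i, Complex.normSq ((T *ᵥ (b - a)) i)) = s * s * K := by
      rw [hba, Matrix.mulVec_smul]
      rw [hK, Finset.mul_sum]
      refine Finset.sum_congr rfl fun i _ => ?_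
      simp only [Pi.smul_apply, smul_eq_mul, Complex.normSq_mul, Complex.normSq_ofReal]
    have hle := h b
    rw [lsq_expand T y a b, hcross, hquad] at hle
    simp only [Complex.ofReal_re] at hle
    -- hle : base ≤ base + s*s*K - 2*(s*N)
    have h2 : 2 * (s * N) ≤ s * s * K := by linarith
    have h3 : 2 * N ≤ s * K := by
      have := (mul_le_mul_iff_right₀ hs).mp (by linarith [h2] : s * (2 * N) ≤ s * (s * K))
      linarith
    have h4 : s * K ≤ N := by
      rw [hs_def, div_mul_eq_mul_div, div_le_iff₀ (by linarith : (0:ℝ) < K + 1)]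
      nlinarith
    linarith
  · intro h b
    rw [lsq_expand T y a b]
    have hcross : (∑ l, (starRingEnd ℂ) ((b - a) l) *
        ∑ i, (starRingEnd ℂ) (T i l) * (y i - (T *ᵥ a) i)) = 0 :=
      Finset.sum_eq_zero fun l _ => by rw [h l, mul_zero]
    rw [hcross]
    have : 0 ≤ ∑ i, Complex.normSq ((T *ᵥ (b - a)) i) :=
      Finset.sum_nonneg fun i _ => Complex.normSq_nonneg _
    simp only [Complex.zero_re]
    linarith

/-- **Normal equations for the optimal DMD amplitudes** (Jovanović et al.).
Let `Ξ ∈ ℂ^{n × L}` be the DMD modes, `λ : Fin L → ℂ` the DMD eigenvalues,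
`V_and ∈ ℂ^{L × m}` the Vandermonde matrix with `(V_and)_{l,k} = λ_l^k`
(`k = 0, …, m−1`), and `Q₁ ∈ ℂ^{n × m}` a data matrix.  Then `a ∈ ℂ^L`
minimizes the squared Frobenius norm `‖Q₁ − Ξ diag(a) V_and‖_F²` if and only if
`((Ξ*Ξ) ∘ conj(V_and V_and*)) a = conj(diag-vector(V_and Q₁* Ξ))`,
where `∘` is the Hadamard product, `*` the conjugate transpose, `conj` the
entrywise complex conjugation, and `diag-vector` extracts the diagonal. -/
theorem optimal_dmd_amplitudes_iff_normal_equations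
    (n L m : ℕ)
    (Xi : Matrix (Fin n) (Fin L) ℂ)
    (lam : Fin L → ℂ)
    (Vand : Matrix (Fin L) (Fin m) ℂ)
    (hVand : ∀ (l : Fin L) (k : Fin m), Vand l k = lam l ^ (k : ℕ))
    (Q1 : Matrix (Fin n) (Fin m) ℂ)
    (a : Fin L → ℂ) :
    (∀ b : Fin L → ℂ,
        (∑ i : Fin n, ∑ k : Fin m,
          Complex.normSq (Q1 i k - (Xi * Matrix.diagonal a * Vand) i k)) ≤
        (∑ i : Fin n, ∑ k : Fin m,
          Complex.normSq (Q1 i k - (Xi * Matrix.diagonal b * Vand) i k))) ↔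
      ((Xiᴴ * Xi) ⊙ ((Vand * Vandᴴ).map (starRingEnd ℂ))) *ᵥ a =
        fun l : Fin L => starRingEnd ℂ ((Vand * Q1ᴴ * Xi) l l) := by
  classical
  set T : Matrix (Fin n × Fin m) (Fin L) ℂ := fun p l => Xi p.1 l * Vand l p.2 with hT
  set y : Fin n × Fin m → ℂ := fun p => Q1 p.1 p.2 with hy
  have hTv : ∀ (b : Fin L → ℂ) (i : Fin n) (k : Fin m),
      (Xi * Matrix.diagonal b * Vand) i k = (T *ᵥ b) (i, k) := by
    intro b i k
    simp only [Matrix.mul_apply, Matrix.diagonal_apply, ite_mul, mul_ite,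
      mul_zero, zero_mul, Finset.sum_ite_eq, Finset.sum_ite_eq', Finset.mem_univ,
      if_true, Matrix.mulVec, dotProduct, hT]
    exact Finset.sum_congr rfl fun l _ => by ring
  have hobj : ∀ b : Fin L → ℂ,
      (∑ i : Fin n, ∑ k : Fin m,
        Complex.normSq (Q1 i k - (Xi * Matrix.diagonal b * Vand) i k)) =
      ∑ p : Fin n × Fin m, Complex.normSq (y p - (T *ᵥ b) p) := by
    intro b
    rw [Fintype.sum_prod_type]
    exact Finset.sum_congr rfl fun i _ => Finset.sum_congr rfl fun k _ => by
      rw [hTv b i k]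
  have h1 : (∀ b : Fin L → ℂ,
      (∑ i : Fin n, ∑ k : Fin m,
        Complex.normSq (Q1 i k - (Xi * Matrix.diagonal a * Vand) i k)) ≤
      (∑ i : Fin n, ∑ k : Fin m,
        Complex.normSq (Q1 i k - (Xi * Matrix.diagonal b * Vand) i k))) ↔
      ∀ l, ∑ p, (starRingEnd ℂ) (T p l) * (y p - (T *ᵥ a) p) = 0 := by
    simp only [hobj]
    exact lsq_key T y a
  rw [h1, funext_iff]
  refine forall_congr' fun l => ?_
  have hA : (((Xiᴴ * Xi) ⊙ ((Vand * Vandᴴ).map (starRingEnd ℂ))) *ᵥ a) l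
      = ∑ p : Fin n × Fin m, (starRingEnd ℂ) (T p l) * (T *ᵥ a) p := by
    have lhs1 : (((Xiᴴ * Xi) ⊙ ((Vand * Vandᴴ).map (starRingEnd ℂ))) *ᵥ a) l
        = ∑ j, ∑ i, ∑ k, ((starRingEnd ℂ) (Xi i l) * Xi i j) *
            (((starRingEnd ℂ) (Vand l k)) * Vand j k) * a j := by
      simp only [Matrix.mulVec, dotProduct, Matrix.hadamard_apply, Matrix.map_apply,
        Matrix.mul_apply, Matrix.conjTranspose_apply, map_sum, _root_.map_mul,
        Complex.star_def, Complex.conj_conj, Finset.sum_mul, Finset.mul_sum]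
      exact Finset.sum_congr rfl fun j _ => Finset.sum_comm
    have rhs1 : (∑ p : Fin n × Fin m, (starRingEnd ℂ) (T p l) * (T *ᵥ a) p)
        = ∑ j, ∑ i, ∑ k, ((starRingEnd ℂ) (Xi i l) * Xi i j) *
            (((starRingEnd ℂ) (Vand l k)) * Vand j k) * a j := by
      simp only [hT, hy, Matrix.mulVec, dotProduct, Fintype.sum_prod_type,
        map_sum, _root_.map_mul, Finset.mul_sum]
      conv_lhs => rw [Finset.sum_comm]
      refine Eq.trans (Finset.sum_congr rfl fun i _ => Finset.sum_comm) ?_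
      conv_lhs => rw [Finset.sum_comm]
      refine Finset.sum_congr rfl fun j _ => ?_
      rw [Finset.sum_comm]
      exact Finset.sum_congr rfl fun i _ => Finset.sum_congr rfl fun k _ => by ring
    rw [lhs1, rhs1]
  have hB : (starRingEnd ℂ) ((Vand * Q1ᴴ * Xi) l l)
      = ∑ p : Fin n × Fin m, (starRingEnd ℂ) (T p l) * y p := by
    simp only [hT, hy, Matrix.mul_apply, Matrix.conjTranspose_apply, map_sum,
      _root_.map_mul, Complex.star_def, Complex.conj_conj, Fintype.sum_prod_type,
      Finset.sum_mul]
    refine Finset.sum_congr rfl fun i _ => Finset.sum_congr rfl fun k _ => by ring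
  have hsplit : (∑ p : Fin n × Fin m, (starRingEnd ℂ) (T p l) * (y p - (T *ᵥ a) p))
      = (starRingEnd ℂ) ((Vand * Q1ᴴ * Xi) l l)
        - (((Xiᴴ * Xi) ⊙ ((Vand * Vandᴴ).map (starRingEnd ℂ))) *ᵥ a) l := by
    rw [hA, hB, ← Finset.sum_sub_distrib]
    exact Finset.sum_congr rfl fun p _ => by ring
  rw [hsplit, sub_eq_zero, eq_comm]
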